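/- Let m ∈ {1,…,n−1}, let w be a permutation of {1,…,n}, and let w′ be the permutation obtained from w by interchanging the values w(m) and w(m+1) (i.e. w′(m) = w(m+1), w′(m+1) = w(m), and w′(r) = w(r) for r ≠ m, m+1). Then for all i, j ∈ {1,…,n} with i ≥ j, i ≠ m and j ≠ m, one has f_{i,j}(w′) = f_{i,j}(w) in ℚ[t]. -/

import Mathlib

/-- The variable `x_k` (for `1 ≤ k ≤ n`) in `ℚ[x_1,…,x_n,t]`, realized as
`MvPolynomial (Fin (n+1)) ℚ` where the variable of index `0` is `t`. -/
noncomputable def xv (n k : ℕ) : MvPolynomial (Fin (n + 1)) ℚ :=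
  if h : k ≤ n then MvPolynomial.X ⟨k, Nat.lt_succ_of_le h⟩ else 0

/-- The variable `t` in `ℚ[x_1,…,x_n,t]`. -/
noncomputable def tv (n : ℕ) : MvPolynomial (Fin (n + 1)) ℚ :=
  MvPolynomial.X 0

/-- `p_i := Σ_{k=1}^{i} (x_k − k·t)`, with `p_0 = 0`. -/
noncomputable def pp (n i : ℕ) : MvPolynomial (Fin (n + 1)) ℚ :=
  ∑ k ∈ Finset.Icc 1 i, (xv n k - (k : MvPolynomial (Fin (n + 1)) ℚ) * tv n)

/-- The polynomials `f_{i,j}`: `f_{j,j} = p_j`, `f_{i,0} = 0`, and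
`f_{i,j} = f_{i−1,j−1} + (x_j − x_i − t)·f_{i−1,j}` for `i > j ≥ 1`. -/
noncomputable def ff (n : ℕ) : ℕ → ℕ → MvPolynomial (Fin (n + 1)) ℚ
  | _, 0 => 0
  | 0, _ + 1 => 0
  | i + 1, j + 1 =>
    if i + 1 = j + 1 then pp n (j + 1)
    else ff n i j + (xv n (j + 1) - xv n (i + 1) - tv n) * ff n i (j + 1)

/-- The `ℚ`-algebra homomorphism `ℚ[x_1,…,x_n,t] → ℚ[t]` sending `x_r ↦ w(r)·t` and
`t ↦ t`; applied to `f_{i,j}` it yields `f_{i,j}(w)`. -/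
noncomputable def evf (n : ℕ) (w : ℕ → ℕ) : MvPolynomial (Fin (n + 1)) ℚ →ₐ[ℚ] Polynomial ℚ :=
  MvPolynomial.aeval fun v : Fin (n + 1) =>
    if (v : ℕ) = 0 then Polynomial.X else Polynomial.C ((w (v : ℕ) : ℚ)) * Polynomial.X

open Polynomial Finset

lemma ff_zero (n i : ℕ) : ff n i 0 = 0 := by cases i <;> rfl

lemma ff_diag (n j : ℕ) : ff n (j + 1) (j + 1) = pp n (j + 1) := by
  rw [ff]; simp

lemma ff_succ (n i j : ℕ) (h : i ≠ j) :
    ff n (i + 1) (j + 1) = ff n i j + (xv n (j + 1) - xv n (i + 1) - tv n) * ff n i (j + 1) := by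
  rw [ff]; simp [h]

lemma ff_lt (n : ℕ) : ∀ i j, i < j → ff n i j = 0 := by
  intro i
  induction i with
  | zero =>
    intro j hj
    match j, hj with
    | j + 1, _ => rfl
  | succ i ih =>
    intro j hj
    match j, hj with
    | j + 1, hj =>
      rw [ff_succ n i j (by omega), ih j (by omega), ih (j + 1) (by omega)]
      ring

lemma evf_tv (n : ℕ) (w : ℕ → ℕ) : evf n w (tv n) = X := by simp [evf, tv]

lemma evf_xv (n : ℕ) (w : ℕ → ℕ) (k : ℕ) (h1 : k ≠ 0) (h2 : k ≤ n) :
    evf n w (xv n k) = C (w k : ℚ) * X := by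
  simp [evf, xv, h2, h1]

lemma evf_xv_congr (n : ℕ) (u v : ℕ → ℕ) (k : ℕ) (h : v k = u k) :
    evf n v (xv n k) = evf n u (xv n k) := by
  unfold xv
  split
  · simp [evf, h]
  · simp

lemma evf_ff_succ (n : ℕ) (w : ℕ → ℕ) (i j : ℕ) (h : i ≠ j) :
    evf n w (ff n (i + 1) (j + 1)) = evf n w (ff n i j)
      + (evf n w (xv n (j + 1)) - evf n w (xv n (i + 1)) - X) * evf n w (ff n i (j + 1)) := by
  rw [ff_succ n i j h]
  simp only [map_add, map_mul, map_sub, evf_tv]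

lemma evf_pp (n : ℕ) (w : ℕ → ℕ) (j : ℕ) :
    evf n w (pp n j) = ∑ k ∈ Icc 1 j, (evf n w (xv n k) - (k : Polynomial ℚ) * X) := by
  simp [pp, evf_tv]

lemma ff_diag0 (n M : ℕ) : ff n M M = pp n M := by
  cases M with
  | zero => rw [ff_zero]; simp [pp]
  | succ M => exact ff_diag n M

lemma pp_succ (n : ℕ) (w : ℕ → ℕ) (j : ℕ) :
    evf n w (pp n (j + 1)) = evf n w (pp n j)
      + (evf n w (xv n (j + 1)) - ((j + 1 : ℕ) : Polynomial ℚ) * X) := by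
  rw [evf_pp, evf_pp, Finset.sum_Icc_succ_top (by omega : 1 ≤ j + 1)]

section diff
variable {n M : ℕ} {u v : ℕ → ℕ}

lemma pp_diff (hn : M + 2 ≤ n)
    (h1 : v (M + 1) = u (M + 2)) (h2 : v (M + 2) = u (M + 1))
    (ho : ∀ r, r ≠ M + 1 → r ≠ M + 2 → v r = u r) (j : ℕ) :
    evf n v (pp n j) = evf n u (pp n j)
      + ((if M + 1 ∈ Icc 1 j then C (u (M + 2) : ℚ) * X - C (u (M + 1) : ℚ) * X else 0)
       - (if M + 2 ∈ Icc 1 j then C (u (M + 2) : ℚ) * X - C (u (M + 1) : ℚ) * X else 0)) := by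
  have key : ∑ k ∈ Icc 1 j, (evf n v (xv n k) - (k : Polynomial ℚ) * X)
      = ∑ k ∈ Icc 1 j, ((evf n u (xv n k) - (k : Polynomial ℚ) * X)
        + ((if k = M + 1 then C (u (M + 2) : ℚ) * X - C (u (M + 1) : ℚ) * X else 0)
         - (if k = M + 2 then C (u (M + 2) : ℚ) * X - C (u (M + 1) : ℚ) * X else 0))) := by
    apply Finset.sum_congr rfl
    intro k _
    by_cases e1 : k = M + 1
    · subst e1
      rw [evf_xv n v _ (by omega) (by omega), evf_xv n u _ (by omega) (by omega), h1,
        if_pos rfl, if_neg (by omega)]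
      ring
    by_cases e2 : k = M + 2
    · subst e2
      rw [evf_xv n v _ (by omega) (by omega), evf_xv n u _ (by omega) (by omega), h2,
        if_neg (by omega), if_pos rfl]
      ring
    · rw [evf_xv_congr n u v k (ho k e1 e2), if_neg e1, if_neg e2]
      ring
  rw [evf_pp, evf_pp, key]
  simp only [Finset.sum_add_distrib, Finset.sum_sub_distrib, Finset.sum_ite_eq']

lemma pp_eq (hn : M + 2 ≤ n)
    (h1 : v (M + 1) = u (M + 2)) (h2 : v (M + 2) = u (M + 1))
    (ho : ∀ r, r ≠ M + 1 → r ≠ M + 2 → v r = u r) (j : ℕ) (hj : j ≠ M + 1) :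
    evf n v (pp n j) = evf n u (pp n j) := by
  have h := pp_diff hn h1 h2 ho j
  by_cases hm : M + 1 ≤ j
  · rw [if_pos (by simp [Finset.mem_Icc]; omega), if_pos (by simp [Finset.mem_Icc]; omega)] at h
    rw [h]; ring
  · rw [if_neg (by simp [Finset.mem_Icc]; omega), if_neg (by simp [Finset.mem_Icc]; omega)] at h
    rw [h]; ring

lemma pp_m (hn : M + 2 ≤ n)
    (h1 : v (M + 1) = u (M + 2)) (h2 : v (M + 2) = u (M + 1))
    (ho : ∀ r, r ≠ M + 1 → r ≠ M + 2 → v r = u r) :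
    evf n v (pp n (M + 1)) = evf n u (pp n (M + 1))
      + (C (u (M + 2) : ℚ) * X - C (u (M + 1) : ℚ) * X) := by
  have h := pp_diff hn h1 h2 ho (M + 1)
  rw [if_pos (by simp [Finset.mem_Icc]), if_neg (by simp [Finset.mem_Icc]), sub_zero] at h
  exact h

end diff

lemma key (n M : ℕ) (hn : M + 2 ≤ n) (u v : ℕ → ℕ)
    (h1 : v (M + 1) = u (M + 2)) (h2 : v (M + 2) = u (M + 1))
    (ho : ∀ r, r ≠ M + 1 → r ≠ M + 2 → v r = u r) :
    ∀ i : ℕ,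
      (∀ j, i ≠ M + 1 → j ≠ M + 1 →
        evf n v (ff n i j) = evf n u (ff n i j)) ∧
      (i = M + 1 → ∀ j, j ≤ M →
        evf n v (ff n i j) = evf n u (ff n i j)
          - (C (u (M + 2) : ℚ) * X - C (u (M + 1) : ℚ) * X) * evf n u (ff n M j)) ∧
      (i = M + 1 →
        evf n v (ff n i (M + 1)) = evf n u (ff n i (M + 1))
          + (C (u (M + 2) : ℚ) * X - C (u (M + 1) : ℚ) * X)) ∧
      (M + 1 < i →
        evf n v (ff n i (M + 1)) = evf n u (ff n i (M + 1))
          + (C (u (M + 2) : ℚ) * X - C (u (M + 1) : ℚ) * X) * evf n u (ff n i (M + 2))) := by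
  intro i
  induction i with
  | zero =>
    refine ⟨?_, by omega, by omega, by omega⟩
    intro j _ _
    match j with
    | 0 => rw [ff_zero]; simp
    | j + 1 => rw [ff_lt n 0 (j + 1) (by omega), map_zero, map_zero]
  | succ i ih =>
    obtain ⟨ihS, ihA1, ihA2, ihB⟩ := ih
    refine ⟨?_, ?_, ?_, ?_⟩
    · -- S
      intro j hi hj
      match j with
      | 0 => rw [ff_zero]; simp
      | j' + 1 =>
        rcases lt_trichotomy i j' with hlt | heq | hgt
        · rw [ff_lt n (i + 1) (j' + 1) (by omega)]; simp
        · subst heq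
          rw [ff_diag]
          exact pp_eq hn h1 h2 ho _ hj
        · -- j' < i
          rw [evf_ff_succ n v i j' (by omega), evf_ff_succ n u i j' (by omega)]
          by_cases hi2 : i = M + 1
          · -- i + 1 = M + 2, so j' + 1 ≤ M
            subst hi2
            have hjM : j' + 1 ≤ M := by omega
            rw [ihA1 rfl j' (by omega), ihA1 rfl (j' + 1) hjM,
              evf_xv_congr n u v (j' + 1) (ho _ (by omega) (by omega)),
              show ((M + 1 : ℕ) + 1) = M + 2 from rfl,
              evf_xv n v (M + 2) (by omega) (by omega), h2,
              evf_xv n u (M + 2) (by omega) (by omega),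
              evf_ff_succ n u M j' (by omega),
              evf_xv n u (M + 1) (by omega) (by omega)]
            ring
          by_cases hj2 : j' = M + 1
          · -- j = M + 2, i > M + 1
            subst hj2
            rw [ihB (by omega), ihS (M + 2) hi2 (by omega),
              show ((M + 1 : ℕ) + 1) = M + 2 from rfl,
              evf_xv n v (M + 2) (by omega) (by omega), h2,
              evf_xv n u (M + 2) (by omega) (by omega),
              evf_xv_congr n u v (i + 1) (ho _ hi (by omega))]
            ring
          · -- generic
            rw [ihS j' hi2 hj2, ihS (j' + 1) hi2 hj,
              evf_xv_congr n u v (j' + 1) (ho _ hj (by omega)),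
              evf_xv_congr n u v (i + 1) (ho _ hi (by omega))]
    · -- A1
      intro hi j hj
      obtain rfl : M = i := by omega
      match j with
      | 0 => rw [ff_zero, ff_zero]; simp
      | j' + 1 =>
        rw [evf_ff_succ n v M j' (by omega), evf_ff_succ n u M j' (by omega),
          ihS j' (by omega) (by omega), ihS (j' + 1) (by omega) (by omega),
          evf_xv_congr n u v (j' + 1) (ho _ (by omega) (by omega)),
          evf_xv n v (M + 1) (by omega) (by omega), h1,
          evf_xv n u (M + 1) (by omega) (by omega)]
        ring
    · -- A2
      intro hi
      obtain rfl : M = i := by omega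
      rw [ff_diag]
      exact pp_m hn h1 h2 ho
    · -- B
      intro hB
      by_cases hi2 : i = M + 1
      · subst hi2
        rw [show ((M + 1 : ℕ) + 1) = M + 2 from rfl]
        rw [show ff n (M + 2) (M + 1) = ff n (M + 1) M
              + (xv n (M + 1) - xv n (M + 2) - tv n) * ff n (M + 1) (M + 1) from
            ff_succ n (M + 1) M (by omega)]
        simp only [map_add, map_mul, map_sub, evf_tv]
        rw [ihA1 rfl M (le_refl M), ihA2 rfl,
          show ff n (M + 2) (M + 2) = pp n (M + 2) from ff_diag n (M + 1),
          pp_succ n u (M + 1),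
          show ff n (M + 1) (M + 1) = pp n (M + 1) from ff_diag n M,
          show ff n M M = pp n M from ff_diag0 n M,
          pp_succ n u M,
          evf_xv n v (M + 1) (by omega) (by omega), h1,
          evf_xv n v (M + 2) (by omega) (by omega), h2,
          evf_xv n u (M + 1) (by omega) (by omega),
          evf_xv n u (M + 2) (by omega) (by omega)]
        push_cast
        ring
      · -- i > M + 1
        have hgt : M + 1 < i := by omega
        rw [show (M + 1 : ℕ) = M + 1 from rfl]
        rw [evf_ff_succ n v i M (by omega), evf_ff_succ n u i M (by omega),
          ihS M hi2 (by omega), ihB hgt,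
          evf_ff_succ n u i (M + 1) hi2,
          evf_xv n v (M + 1) (by omega) (by omega), h1,
          evf_xv n u (M + 1) (by omega) (by omega),
          show ((M + 1 : ℕ) + 1) = M + 2 from rfl,
          evf_xv n u (M + 2) (by omega) (by omega),
          evf_xv_congr n u v (i + 1) (ho _ (by omega) (by omega))]
        ring

/-- Let `m ∈ {1,…,n−1}`, let `w` be a permutation of `{1,…,n}` (modelled as
`w : Equiv.Perm ℕ` fixing every point outside `{1,…,n}`), and let `w' = w ∘ (m m+1)` be
obtained from `w` by interchanging the values `w(m)` and `w(m+1)`.  Then for all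
`i ≥ j` in `{1,…,n}` with `i ≠ m` and `j ≠ m`, `f_{i,j}(w') = f_{i,j}(w)` in `ℚ[t]`. -/
theorem stmt8 (n m : ℕ) (hm1 : 1 ≤ m) (hm2 : m + 1 ≤ n)
    (w : Equiv.Perm ℕ) (hw : ∀ r, r ∉ Finset.Icc 1 n → w r = r)
    (i j : ℕ) (hj : 1 ≤ j) (hji : j ≤ i) (hin : i ≤ n) (him : i ≠ m) (hjm : j ≠ m) :
    evf n (fun r => w (Equiv.swap m (m + 1) r)) (ff n i j) = evf n ⇑w (ff n i j) := by
  obtain ⟨M, rfl⟩ : ∃ M, m = M + 1 := ⟨m - 1, by omega⟩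
  refine ((key n M (by omega) (⇑w) (fun r => w (Equiv.swap (M + 1) (M + 1 + 1) r))
    ?_ ?_ ?_) i).1 j him hjm
  · simp [Equiv.swap_apply_left]
  · show w (Equiv.swap (M + 1) (M + 1 + 1) (M + 2)) = w (M + 1)
    rw [show (M + 2 : ℕ) = M + 1 + 1 from rfl, Equiv.swap_apply_right]
  · intro r hr1 hr2
    show w (Equiv.swap (M + 1) (M + 1 + 1) r) = w r
    rw [Equiv.swap_apply_of_ne_of_ne hr1 (by omega)]
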